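/- Let G be a finite group with |G| > 1. Then 𝒫(G) is K_{1,2}-free (contains no path on three vertices, i.e. no vertex has two distinct neighbours) if and only if G is a p-group for some prime p, or G is cyclic of order p·q for two distinct primes p, q. -/

import Mathlib

open SimpleGraph

/-- The coprime graph of subgroups of a group `G`: vertices are the proper nontrivial
subgroups of `G`, and two distinct vertices are adjacent iff their orders are coprime. -/
def coprimeGraph (G : Type*) [Group G] :
    SimpleGraph {H : Subgroup G // H ≠ ⊥ ∧ H ≠ ⊤} where
  Adj H K := H ≠ K ∧ Nat.Coprime (Nat.card H.1) (Nat.card K.1)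
  symm := ⟨fun _ _ h => ⟨h.1.symm, h.2.symm⟩⟩
  loopless := ⟨fun _ h => h.1 rfl⟩

private lemma dvd_prime_mul_aux {p q d : ℕ} (hp : p.Prime) (hq : q.Prime) (h : d ∣ p * q) :
    d = 1 ∨ d = p ∨ d = q ∨ d = p * q := by
  obtain ⟨a, b, ha, hb, rfl⟩ := Nat.dvd_mul.mp h
  rcases (Nat.dvd_prime hp).mp ha with rfl | rfl <;>
    rcases (Nat.dvd_prime hq).mp hb with rfl | rfl <;> simp

/-- In a finite cyclic group, any element whose `card K`-th power is 1 lies in `K`. -/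
private lemma mem_of_pow_card_eq_one {G : Type*} [Group G] [Finite G] [IsCyclic G]
    {K : Subgroup G} {x : G} (hx : x ^ Nat.card K = 1) : x ∈ K := by
  classical
  have _inst := Fintype.ofFinite G
  set d := Nat.card K with hd
  have hd0 : 0 < d := Nat.card_pos
  have hsub : (K : Set G).toFinset ⊆ ({a : G | a ^ d = 1} : Finset G) := by
    intro a ha
    rw [Set.mem_toFinset] at ha
    simp only [Finset.mem_filter, Finset.mem_univ, true_and]
    have h1 : (⟨a, ha⟩ : K) ^ d = 1 := by rw [hd]; exact pow_card_eq_one'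
    have h2 := congrArg (Subtype.val) h1
    simpa using h2
  have hcard : ((K : Set G).toFinset).card = d := by
    simp [Set.toFinset_card, ← Nat.card_eq_fintype_card]; exact hd.symm
  have hle : ({a : G | a ^ d = 1} : Finset G).card ≤ d := IsCyclic.card_pow_eq_one_le hd0
  have heq : (K : Set G).toFinset = ({a : G | a ^ d = 1} : Finset G) :=
    Finset.eq_of_subset_of_card_le hsub (by rw [hcard]; exact hle)
  have hmem : x ∈ (K : Set G).toFinset := by
    rw [heq]; simp only [Finset.mem_filter, Finset.mem_univ, true_and]; exact hx
  rwa [Set.mem_toFinset] at hmem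

/-- In a finite cyclic group, subgroups of the same cardinality are equal. -/
private lemma cyclic_subgroup_eq_of_card_eq {G : Type*} [Group G] [Finite G] [IsCyclic G]
    {H K : Subgroup G} (h : Nat.card H = Nat.card K) : H = K := by
  have key : ∀ (A B : Subgroup G), Nat.card A = Nat.card B → A ≤ B := by
    intro A B hAB x hx
    apply mem_of_pow_card_eq_one
    have h1 : (⟨x, hx⟩ : A) ^ Nat.card A = 1 := pow_card_eq_one'
    have h2 := congrArg (Subtype.val) h1
    simp only [SubmonoidClass.coe_pow, OneMemClass.coe_one] at h2
    rw [← hAB]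
    exact h2
  exact le_antisymm (key H K h) (key K H h.symm)

/-- The key consequence of `K₁,₂`-freeness: there is no vertex adjacent to two
distinct other vertices. -/
private lemma no_K12_aux {G : Type*} [Group G] [Finite G]
    (hfree : ¬ ∃ f : completeBipartiteGraph (Fin 1) (Fin 2) →g coprimeGraph G,
        Function.Injective f)
    {A B C : Subgroup G} (hA : A ≠ ⊥ ∧ A ≠ ⊤) (hB : B ≠ ⊥ ∧ B ≠ ⊤) (hC : C ≠ ⊥ ∧ C ≠ ⊤)
    (hBC : B ≠ C) (h1 : Nat.Coprime (Nat.card A) (Nat.card B))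
    (h2 : Nat.Coprime (Nat.card A) (Nat.card C)) : False := by
  have hAB : A ≠ B := by
    rintro rfl
    exact hA.1 (Subgroup.card_eq_one.mp ((by simpa [Nat.Coprime] using h1 : Nat.card A = 1)))
  have hAC : A ≠ C := by
    rintro rfl
    exact hA.1 (Subgroup.card_eq_one.mp ((by simpa [Nat.Coprime] using h2 : Nat.card A = 1)))
  set F : Fin 1 ⊕ Fin 2 → {H : Subgroup G // H ≠ ⊥ ∧ H ≠ ⊤} :=
    Sum.elim (fun _ => ⟨A, hA⟩) ![⟨B, hB⟩, ⟨C, hC⟩] with hF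
  have hF0 : F (Sum.inr 0) = ⟨B, hB⟩ := by simp [hF]
  have hF1 : F (Sum.inr 1) = ⟨C, hC⟩ := by simp [hF]
  have hFl : ∀ a, F (Sum.inl a) = ⟨A, hA⟩ := fun a => rfl
  refine hfree ⟨⟨F, ?_⟩, ?_⟩
  · rintro (a | b) (c | d) hadj
    · simp at hadj
    · fin_cases d
      · exact ⟨fun he => hAB (congrArg Subtype.val he), h1⟩
      · exact ⟨fun he => hAC (congrArg Subtype.val he), h2⟩
    · fin_cases b
      · exact ⟨fun he => hAB (congrArg Subtype.val he).symm, h1.symm⟩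
      · exact ⟨fun he => hAC (congrArg Subtype.val he).symm, h2.symm⟩
    · simp at hadj
  · intro u v he
    have he' : F u = F v := he
    clear he
    rcases u with a | b <;> rcases v with c | d
    · exact congrArg Sum.inl (Subsingleton.elim a c)
    · exfalso
      fin_cases d
      · exact hAB (congrArg Subtype.val he')
      · exact hAC (congrArg Subtype.val he')
    · exfalso
      fin_cases b
      · exact hAB (congrArg Subtype.val he').symm
      · exact hAC (congrArg Subtype.val he').symm
    · fin_cases b <;> fin_cases d
      · rfl
      · exact absurd (congrArg Subtype.val he') hBC
      · exact absurd (congrArg Subtype.val he').symm hBC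
      · rfl

theorem coprimeGraph_K12_free_iff {G : Type*} [Group G] [Finite G]
    (hG : 1 < Nat.card G) :
    (¬ ∃ f : completeBipartiteGraph (Fin 1) (Fin 2) →g coprimeGraph G,
        Function.Injective f) ↔
      ((∃ p : ℕ, p.Prime ∧ IsPGroup p G) ∨
       (IsCyclic G ∧ ∃ p q : ℕ, p.Prime ∧ q.Prime ∧ p ≠ q ∧ Nat.card G = p * q)) := by
  constructor
  · intro hfree
    by_cases hone : ∀ p q : ℕ, p.Prime → q.Prime → p ∣ Nat.card G → q ∣ Nat.card G → p = q
    · obtain ⟨p, hp, hpd⟩ := Nat.exists_prime_and_dvd (by omega : Nat.card G ≠ 1)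
      left
      exact ⟨p, hp, IsPGroup.of_card (Nat.eq_prime_pow_of_unique_prime_dvd (by omega)
        (fun {d} hd hdd => hone d p hd hp hdd hpd))⟩
    · push_neg at hone
      obtain ⟨p, q, hp, hq, hpd, hqd, hpq⟩ := hone
      haveI := Fact.mk hp; haveI := Fact.mk hq
      have hco : Nat.Coprime p q := (Nat.coprime_primes hp hq).mpr hpq
      obtain ⟨x, hx⟩ := exists_prime_orderOf_dvd_card' p hpd
      obtain ⟨y, hy⟩ := exists_prime_orderOf_dvd_card' q hqd
      set P := Subgroup.zpowers x with hPdef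
      set Q := Subgroup.zpowers y with hQdef
      have hcP : Nat.card P = p := by rw [hPdef, Nat.card_zpowers, hx]
      have hcQ : Nat.card Q = q := by rw [hQdef, Nat.card_zpowers, hy]
      have hqnp : ¬ q ∣ p := fun h => hpq ((Nat.prime_dvd_prime_iff_eq hq hp).mp h).symm
      have hpnq : ¬ p ∣ q := fun h => hpq ((Nat.prime_dvd_prime_iff_eq hp hq).mp h)
      have vert : ∀ (H : Subgroup G) (r : ℕ), r.Prime → r ∣ Nat.card G →
          ¬ r ∣ Nat.card H → 1 < Nat.card H → H ≠ ⊥ ∧ H ≠ ⊤ := by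
        intro H r hr hrd hrH hH1
        constructor
        · intro hb; rw [hb, Subgroup.card_bot] at hH1; omega
        · intro ht; rw [ht, Subgroup.card_top] at hrH; exact hrH hrd
      have hPv : P ≠ ⊥ ∧ P ≠ ⊤ :=
        vert P q hq hqd (by rw [hcP]; exact hqnp) (by rw [hcP]; exact hp.one_lt)
      have hQv : Q ≠ ⊥ ∧ Q ≠ ⊤ :=
        vert Q p hp hpd (by rw [hcQ]; exact hpnq) (by rw [hcQ]; exact hq.one_lt)
      have uniqP : ∀ H K : Subgroup G, Nat.card H = p → Nat.card K = p → H = K := by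
        intro H K hH hK
        by_contra hne
        have hHv := vert H q hq hqd (by rw [hH]; exact hqnp) (by rw [hH]; exact hp.one_lt)
        have hKv := vert K q hq hqd (by rw [hK]; exact hqnp) (by rw [hK]; exact hp.one_lt)
        exact no_K12_aux hfree hQv hHv hKv hne (by rw [hcQ, hH]; exact hco.symm)
          (by rw [hcQ, hK]; exact hco.symm)
      have uniqQ : ∀ H K : Subgroup G, Nat.card H = q → Nat.card K = q → H = K := by
        intro H K hH hK
        by_contra hne
        have hHv := vert H p hp hpd (by rw [hH]; exact hpnq) (by rw [hH]; exact hq.one_lt)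
        have hKv := vert K p hp hpd (by rw [hK]; exact hpnq) (by rw [hK]; exact hq.one_lt)
        exact no_K12_aux hfree hPv hHv hKv hne (by rw [hcP, hH]; exact hco)
          (by rw [hcP, hK]; exact hco)
      have hp2 : ¬ p ^ 2 ∣ Nat.card G := by
        intro h2
        obtain ⟨H, hH⟩ := Sylow.exists_subgroup_card_pow_prime p h2
        have hqnp2 : ¬ q ∣ p ^ 2 := fun h => hqnp (hq.dvd_of_dvd_pow h)
        have hlt : p < p ^ 2 := by nlinarith [hp.two_le]
        have hHv := vert H q hq hqd (by rw [hH]; exact hqnp2)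
          (by rw [hH]; nlinarith [hp.two_le])
        have hne : P ≠ H := by
          intro heq; rw [heq, hH] at hcP; omega
        exact no_K12_aux hfree hQv hPv hHv hne (by rw [hcQ, hcP]; exact hco.symm)
          (by rw [hcQ, hH]; exact hco.symm.pow_right 2)
      have hq2 : ¬ q ^ 2 ∣ Nat.card G := by
        intro h2
        obtain ⟨H, hH⟩ := Sylow.exists_subgroup_card_pow_prime q h2
        have hpnq2 : ¬ p ∣ q ^ 2 := fun h => hpnq (hp.dvd_of_dvd_pow h)
        have hlt : q < q ^ 2 := by nlinarith [hq.two_le]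
        have hHv := vert H p hp hpd (by rw [hH]; exact hpnq2)
          (by rw [hH]; nlinarith [hq.two_le])
        have hne : Q ≠ H := by
          intro heq; rw [heq, hH] at hcQ; omega
        exact no_K12_aux hfree hPv hQv hHv hne (by rw [hcP, hcQ]; exact hco)
          (by rw [hcP, hH]; exact hco.pow_right 2)
      have hprimes : ∀ r : ℕ, r.Prime → r ∣ Nat.card G → r = p ∨ r = q := by
        intro r hr hrd
        by_contra hne
        push_neg at hne
        haveI := Fact.mk hr
        obtain ⟨z, hz⟩ := exists_prime_orderOf_dvd_card' r hrd
        have hcR : Nat.card (Subgroup.zpowers z) = r := by rw [Nat.card_zpowers, hz]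
        have hpnr : ¬ p ∣ r := fun h => hne.1 ((Nat.prime_dvd_prime_iff_eq hp hr).mp h).symm
        have hRv := vert (Subgroup.zpowers z) p hp hpd (by rw [hcR]; exact hpnr)
          (by rw [hcR]; exact hr.one_lt)
        have hQR : Q ≠ Subgroup.zpowers z := by
          intro heq; rw [heq, hcR] at hcQ; exact hne.2 hcQ
        exact no_K12_aux hfree hPv hQv hRv hQR (by rw [hcP, hcQ]; exact hco)
          (by rw [hcP, hcR]; exact (Nat.coprime_primes hp hr).mpr (fun h => hne.1 h.symm))
      obtain ⟨m, hm⟩ := Nat.Coprime.mul_dvd_of_dvd_of_dvd hco hpd hqd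
      have hm1 : m = 1 := by
        by_contra hm1
        obtain ⟨r, hr, hrm⟩ := Nat.exists_prime_and_dvd hm1
        obtain ⟨t, rfl⟩ := hrm
        rcases hprimes r hr ⟨p * q * t, by rw [hm]; ring⟩ with rfl | rfl
        · exact hp2 ⟨q * t, by rw [hm]; ring⟩
        · exact hq2 ⟨p * t, by rw [hm]; ring⟩
      have hnpq : Nat.card G = p * q := by rw [hm, hm1, mul_one]
      have hPn : P.Normal := by
        constructor
        intro h hh g
        have hinj : Function.Injective ((MulAut.conj g) : G →* G) :=
          (MulAut.conj g).injective
        have hcard : Nat.card (P.map ((MulAut.conj g) : G →* G)) = p := by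
          rw [← hcP]
          exact (Nat.card_congr (Subgroup.equivMapOfInjective P _ hinj).toEquiv).symm
        rw [← uniqP (P.map ((MulAut.conj g) : G →* G)) P hcard hcP]
        exact Subgroup.mem_map.mpr ⟨h, hh, rfl⟩
      have hQn : Q.Normal := by
        constructor
        intro h hh g
        have hinj : Function.Injective ((MulAut.conj g) : G →* G) :=
          (MulAut.conj g).injective
        have hcard : Nat.card (Q.map ((MulAut.conj g) : G →* G)) = q := by
          rw [← hcQ]
          exact (Nat.card_congr (Subgroup.equivMapOfInjective Q _ hinj).toEquiv).symm
        rw [← uniqQ (Q.map ((MulAut.conj g) : G →* G)) Q hcard hcQ]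
        exact Subgroup.mem_map.mpr ⟨h, hh, rfl⟩
      have hdis : Disjoint P Q :=
        disjoint_iff.mpr (Subgroup.inf_eq_bot_of_coprime (by rw [hcP, hcQ]; exact hco))
      have hcomm : Commute x y :=
        Subgroup.commute_of_normal_of_disjoint P Q hPn hQn hdis x y
          (Subgroup.mem_zpowers x) (Subgroup.mem_zpowers y)
      have hord : orderOf (x * y) = Nat.card G := by
        rw [Commute.orderOf_mul_eq_mul_orderOf_of_coprime hcomm
          (by rw [hx, hy]; exact hco), hx, hy, hnpq]
      exact Or.inr ⟨isCyclic_of_orderOf_eq_card _ hord, p, q, hp, hq, hpq, hnpq⟩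
  · rintro (⟨p, hp, hpg⟩ | ⟨hcyc, p, q, hp, hq, hpq, hcard⟩) <;> rintro ⟨f, hf⟩
    · haveI := Fact.mk hp
      have hadj : (completeBipartiteGraph (Fin 1) (Fin 2)).Adj (Sum.inl 0) (Sum.inr 0) := by
        simp
      obtain ⟨hne, hcop⟩ := f.map_rel hadj
      have hdvd : ∀ (v : {H : Subgroup G // H ≠ ⊥ ∧ H ≠ ⊤}), p ∣ Nat.card v.1 := by
        intro v
        obtain ⟨k, hk⟩ := (IsPGroup.iff_card).mp (hpg.to_subgroup v.1)
        rcases k with _ | k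
        · exact absurd (Subgroup.card_eq_one.mp (by rw [hk, pow_zero])) v.2.1
        · rw [hk]; exact dvd_pow_self p (Nat.succ_ne_zero k)
      exact hp.one_lt.ne' (Nat.eq_one_of_dvd_coprimes hcop (hdvd _) (hdvd _))
    · haveI := hcyc
      have hcards : ∀ v : {H : Subgroup G // H ≠ ⊥ ∧ H ≠ ⊤},
          Nat.card v.1 = p ∨ Nat.card v.1 = q := by
        intro v
        have hdvd : Nat.card v.1 ∣ p * q := hcard ▸ Subgroup.card_subgroup_dvd_card v.1
        rcases dvd_prime_mul_aux hp hq hdvd with h1 | h | h | h1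
        · exact absurd (Subgroup.card_eq_one.mp h1) v.2.1
        · exact Or.inl h
        · exact Or.inr h
        · exact absurd (Subgroup.eq_top_of_card_eq v.1 (by rw [h1, hcard])) v.2.2
      have h01 : f (Sum.inl 0) ≠ f (Sum.inr 0) := fun h => by simpa using hf h
      have h02 : f (Sum.inl 0) ≠ f (Sum.inr 1) := fun h => by simpa using hf h
      have h12 : f (Sum.inr 0) ≠ f (Sum.inr 1) := fun h => absurd (hf h) (by decide)
      have key : ∀ a b : {H : Subgroup G // H ≠ ⊥ ∧ H ≠ ⊤}, a ≠ b →
          Nat.card a.1 = Nat.card b.1 → False := fun a b hab hcd =>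
        hab (Subtype.ext (cyclic_subgroup_eq_of_card_eq hcd))
      rcases hcards (f (Sum.inl 0)) with h0 | h0 <;>
        rcases hcards (f (Sum.inr 0)) with h1 | h1 <;>
        rcases hcards (f (Sum.inr 1)) with h2 | h2
      all_goals first
        | exact key _ _ h01 (h0.trans h1.symm)
        | exact key _ _ h02 (h0.trans h2.symm)
        | exact key _ _ h12 (h1.trans h2.symm)
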